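/- arXiv:2505.20991 — 3 statements merged into one kernel-verified Lean document; each statement's English description precedes it below -/
import Mathlib

section
/- Let (ν^k) be a sequence in a real inner product space and let τ ∈ (0,1) and M ≥ 0. If ‖(1 + K(1-τ)) ν^{K+1} + τ ∑_{k=1}^K ν^k‖ ≤ τ M for all K = 0, 1, 2, ..., then ‖∑_{k=1}^K ν^k‖ ≤ M for all K = 1, 2, .... -/
theorem partial_sum_bound {E : Type*} [NormedAddCommGroup E] [InnerProductSpace ℝ E]
    (ν : ℕ → E) (τ M : ℝ) (hτ0 : 0 < τ) (hτ1 : τ < 1) (hM : 0 ≤ M)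
    (h : ∀ K : ℕ,
      ‖(1 + (K : ℝ) * (1 - τ)) • ν (K + 1) + τ • ∑ k ∈ Finset.Icc 1 K, ν k‖ ≤ τ * M) :
    ∀ K : ℕ, 1 ≤ K → ‖∑ k ∈ Finset.Icc 1 K, ν k‖ ≤ M := by
  have key : ∀ K : ℕ, ‖∑ k ∈ Finset.Icc 1 K, ν k‖ ≤ M := by
    intro K
    induction K with
    | zero => simpa using hM
    | succ n ih =>
      have hn := h n
      set a : ℝ := 1 + (n : ℝ) * (1 - τ) with ha_def
      have hncast : (0 : ℝ) ≤ (n : ℝ) := Nat.cast_nonneg n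
      have ha1 : 1 ≤ a := by nlinarith
      have hapos : 0 < a := lt_of_lt_of_le one_pos ha1
      have haτ : 0 ≤ a - τ := by linarith
      have hsum : ∑ k ∈ Finset.Icc 1 (n + 1), ν k
          = ∑ k ∈ Finset.Icc 1 n, ν k + ν (n + 1) := by
        rw [Finset.sum_Icc_succ_top (by omega)]
      have heq : a • (∑ k ∈ Finset.Icc 1 (n + 1), ν k)
          = (a • ν (n + 1) + τ • ∑ k ∈ Finset.Icc 1 n, ν k)
            + (a - τ) • ∑ k ∈ Finset.Icc 1 n, ν k := by
        rw [hsum, smul_add, sub_smul]; abel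
      have hmain : a * ‖∑ k ∈ Finset.Icc 1 (n + 1), ν k‖ ≤ a * M := by
        calc a * ‖∑ k ∈ Finset.Icc 1 (n + 1), ν k‖
            = ‖a • (∑ k ∈ Finset.Icc 1 (n + 1), ν k)‖ := by
              rw [norm_smul, Real.norm_eq_abs, abs_of_pos hapos]
          _ = ‖(a • ν (n + 1) + τ • ∑ k ∈ Finset.Icc 1 n, ν k)
                + (a - τ) • ∑ k ∈ Finset.Icc 1 n, ν k‖ := by rw [heq]
          _ ≤ ‖a • ν (n + 1) + τ • ∑ k ∈ Finset.Icc 1 n, ν k‖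
                + ‖(a - τ) • ∑ k ∈ Finset.Icc 1 n, ν k‖ := norm_add_le _ _
          _ ≤ τ * M + (a - τ) * ‖∑ k ∈ Finset.Icc 1 n, ν k‖ := by
              gcongr
              rw [norm_smul, Real.norm_eq_abs, abs_of_nonneg haτ]
          _ ≤ τ * M + (a - τ) * M := by nlinarith [norm_nonneg (∑ k ∈ Finset.Icc 1 n, ν k)]
          _ = a * M := by ring
      exact le_of_mul_le_mul_left hmain hapos
  intro K _
  exact key K
end

section
/- Let τ ∈ (0,1), M ≥ 0, and suppose a sequence (ν^k) satisfies the hypotheses ‖(1+K(1-τ))ν^{K+1} + τ∑_{k=1}^K ν^k‖ ≤ τM for all K ≥ 0 with some constant C₃ = M·τ. Then for all K ≥ 1, ‖ν^{K+1}‖ ≤ 2C₃/(1 + K(1-τ)) where C₃ bounds the expression, i.e., if ‖(1/θ^K)ν^{K+1} + τ∑_{k=1}^K ν^k‖ ≤ C₃ with θ^K = 1/(1+K(1-τ)), then ‖ν^{K+1}‖ ≤ 2C₃/(1 + K(1-τ)). -/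
theorem term_decay_bound {E : Type*} [NormedAddCommGroup E] [InnerProductSpace ℝ E]
    (ν : ℕ → E) (τ C₃ : ℝ) (hτ0 : 0 < τ) (hτ1 : τ < 1) (hC : 0 ≤ C₃)
    (h : ∀ K : ℕ,
      ‖(1 + (K : ℝ) * (1 - τ)) • ν (K + 1) + τ • ∑ k ∈ Finset.Icc 1 K, ν k‖ ≤ C₃) :
    ∀ K : ℕ, 1 ≤ K → ‖ν (K + 1)‖ ≤ 2 * C₃ / (1 + (K : ℝ) * (1 - τ)) := by
  have hsum : ∀ K : ℕ, ‖τ • ∑ k ∈ Finset.Icc 1 K, ν k‖ ≤ C₃ := by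
    intro K
    induction K with
    | zero => simpa using hC
    | succ K ih =>
      set b : ℝ := 1 + (K : ℝ) * (1 - τ) with hbdef
      have hb1 : (1 : ℝ) ≤ b := by
        have : 0 ≤ (K : ℝ) * (1 - τ) := mul_nonneg (Nat.cast_nonneg K) (by linarith)
        linarith
      have hb0 : (0 : ℝ) < b := lt_of_lt_of_le one_pos hb1
      have hτb : τ / b ≤ 1 := by
        rw [div_le_one hb0]; linarith
      have hτb0 : 0 ≤ τ / b := by positivity
      have key : τ • ∑ k ∈ Finset.Icc 1 (K + 1), ν k
          = (τ / b) • (b • ν (K + 1) + τ • ∑ k ∈ Finset.Icc 1 K, ν k)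
            + (1 - τ / b) • (τ • ∑ k ∈ Finset.Icc 1 K, ν k) := by
        rw [Finset.sum_Icc_succ_top (by omega : 1 ≤ K + 1)]
        match_scalars <;> field_simp <;> ring
      rw [key]
      calc ‖(τ / b) • (b • ν (K + 1) + τ • ∑ k ∈ Finset.Icc 1 K, ν k)
            + (1 - τ / b) • (τ • ∑ k ∈ Finset.Icc 1 K, ν k)‖
          ≤ ‖(τ / b) • (b • ν (K + 1) + τ • ∑ k ∈ Finset.Icc 1 K, ν k)‖
            + ‖(1 - τ / b) • (τ • ∑ k ∈ Finset.Icc 1 K, ν k)‖ := norm_add_le _ _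
        _ ≤ (τ / b) * C₃ + (1 - τ / b) * C₃ := by
            gcongr ?_ + ?_
            · rw [norm_smul, Real.norm_of_nonneg hτb0]
              exact mul_le_mul_of_nonneg_left (h K) hτb0
            · rw [norm_smul, Real.norm_of_nonneg (by linarith)]
              exact mul_le_mul_of_nonneg_left ih (by linarith)
        _ = C₃ := by ring
  intro K _
  set b : ℝ := 1 + (K : ℝ) * (1 - τ) with hbdef
  have hb1 : (1 : ℝ) ≤ b := by
    have : 0 ≤ (K : ℝ) * (1 - τ) := mul_nonneg (Nat.cast_nonneg K) (by linarith)
    linarith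
  have hb0 : (0 : ℝ) < b := lt_of_lt_of_le one_pos hb1
  have hbn : ‖b • ν (K + 1)‖ ≤ 2 * C₃ := by
    have : b • ν (K + 1)
        = (b • ν (K + 1) + τ • ∑ k ∈ Finset.Icc 1 K, ν k)
          - τ • ∑ k ∈ Finset.Icc 1 K, ν k := by abel
    rw [this]
    calc ‖_ - _‖ ≤ ‖b • ν (K + 1) + τ • ∑ k ∈ Finset.Icc 1 K, ν k‖
          + ‖τ • ∑ k ∈ Finset.Icc 1 K, ν k‖ := norm_sub_le _ _
      _ ≤ C₃ + C₃ := add_le_add (h K) (hsum K)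
      _ = 2 * C₃ := by ring
  rw [norm_smul, Real.norm_of_nonneg hb0.le] at hbn
  rw [le_div_iff₀ hb0]
  linarith
end

section
/- Let 0 < γ₁ ≤ γ₂ and define h: ℝ → ℝ by h(x) = 0 for |x| ≤ γ₁, h(x) = (x² - 2γ₁|x| + γ₁²)/(2(γ₂ - γ₁)) for γ₁ < |x| ≤ γ₂, and h(x) = |x| - (γ₁ + γ₂)/2 for |x| > γ₂ (assuming γ₁ < γ₂). Then h is convex and continuously differentiable on ℝ. -/
set_option maxHeartbeats 1000000

lemma hasDerivAt_sq_max (x : ℝ) :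
    HasDerivAt (fun t : ℝ => max t 0 ^ 2) (2 * max x 0) x := by
  rcases lt_trichotomy x 0 with hx | hx | hx
  · have hev : (fun t : ℝ => max t 0 ^ 2) =ᶠ[nhds x] fun _ => (0 : ℝ) := by
      filter_upwards [eventually_lt_nhds hx] with t ht
      simp [max_eq_right ht.le]
    have : HasDerivAt (fun _ : ℝ => (0 : ℝ)) (2 * max x 0) x := by
      simpa [max_eq_right hx.le] using hasDerivAt_const x (0 : ℝ)
    exact this.congr_of_eventuallyEq hev
  · subst hx
    rw [hasDerivAt_iff_isLittleO]
    have : (fun t : ℝ => max t 0 ^ 2) =o[nhds 0] fun t => t := by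
      rw [Asymptotics.isLittleO_iff]
      intro c hc
      filter_upwards [eventually_abs_sub_lt 0 hc] with t ht
      rcases le_or_gt t 0 with h | h
      · simp [max_eq_right h, abs_nonneg, mul_nonneg hc.le (abs_nonneg t)]
      · rw [max_eq_left h.le]
        rw [sub_zero] at ht
        rw [Real.norm_eq_abs, Real.norm_eq_abs, abs_of_pos h,
          abs_of_pos (by positivity : (0:ℝ) < t ^ 2)]
        nlinarith [abs_of_pos h ▸ ht]
    simpa using this
  · have hev : (fun t : ℝ => max t 0 ^ 2) =ᶠ[nhds x] fun t => t ^ 2 := by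
      filter_upwards [eventually_gt_nhds hx] with t ht
      simp [max_eq_left ht.le]
    have : HasDerivAt (fun t : ℝ => t ^ 2) (2 * max x 0) x := by
      simpa [max_eq_left hx.le, mul_comm] using hasDerivAt_pow 2 x
    exact this.congr_of_eventuallyEq hev

theorem scad_like_convex_C1 (γ₁ γ₂ : ℝ) (h1 : 0 < γ₁) (h12 : γ₁ < γ₂)
    (h : ℝ → ℝ)
    (hh : ∀ x, h x = if |x| ≤ γ₁ then 0
      else if |x| ≤ γ₂ then (x ^ 2 - 2 * γ₁ * |x| + γ₁ ^ 2) / (2 * (γ₂ - γ₁))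
      else |x| - (γ₁ + γ₂) / 2) :
    ConvexOn ℝ Set.univ h ∧ ∃ h' : ℝ → ℝ, Continuous h' ∧ ∀ x, HasDerivAt h (h' x) x := by
  have hpos : (0:ℝ) < γ₂ - γ₁ := by linarith
  -- closed form via squared hinges
  have key : ∀ x, h x = (max (x - γ₁) 0 ^ 2 + max (-x - γ₁) 0 ^ 2
      - max (x - γ₂) 0 ^ 2 - max (-x - γ₂) 0 ^ 2) / (2 * (γ₂ - γ₁)) := by
    intro x
    rw [hh]
    rcases abs_cases x with ⟨hx, hx0⟩ | ⟨hx, hx0⟩ <;> rw [hx] <;>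
      simp only [max_def] <;> split_ifs <;>
      first
        | linarith
        | (field_simp; try ring)
  have hfun : h = fun x => (max (x - γ₁) 0 ^ 2 + max (-x - γ₁) 0 ^ 2
      - max (x - γ₂) 0 ^ 2 - max (-x - γ₂) 0 ^ 2) / (2 * (γ₂ - γ₁)) :=
    funext key
  set h' : ℝ → ℝ := fun x => (max (x - γ₁) 0 - max (-x - γ₁) 0
      - max (x - γ₂) 0 + max (-x - γ₂) 0) / (γ₂ - γ₁) with h'def
  have hderiv : ∀ x, HasDerivAt h (h' x) x := by
    intro x
    rw [hfun]
    have d1 : HasDerivAt (fun t : ℝ => max (t - γ₁) 0 ^ 2) (2 * max (x - γ₁) 0) x := by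
      have := (hasDerivAt_sq_max (x - γ₁)).comp x
        ((hasDerivAt_id x).sub_const γ₁)
      simpa [Function.comp_def] using this
    have d2 : HasDerivAt (fun t : ℝ => max (-t - γ₁) 0 ^ 2)
        (2 * max (-x - γ₁) 0 * (-1)) x := by
      have hl : HasDerivAt (fun t : ℝ => -t - γ₁) (-1) x := by
        simpa using ((hasDerivAt_id x).neg.sub_const γ₁)
      exact (hasDerivAt_sq_max (-x - γ₁)).comp x hl
    have d3 : HasDerivAt (fun t : ℝ => max (t - γ₂) 0 ^ 2) (2 * max (x - γ₂) 0) x := by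
      have := (hasDerivAt_sq_max (x - γ₂)).comp x
        ((hasDerivAt_id x).sub_const γ₂)
      simpa [Function.comp_def] using this
    have d4 : HasDerivAt (fun t : ℝ => max (-t - γ₂) 0 ^ 2)
        (2 * max (-x - γ₂) 0 * (-1)) x := by
      have hl : HasDerivAt (fun t : ℝ => -t - γ₂) (-1) x := by
        simpa using ((hasDerivAt_id x).neg.sub_const γ₂)
      exact (hasDerivAt_sq_max (-x - γ₂)).comp x hl
    have := (((d1.add d2).sub d3).sub d4).div_const (2 * (γ₂ - γ₁))
    refine HasDerivAt.congr_deriv this ?_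
    rw [h'def]
    field_simp
    ring
  have hcont : Continuous h' := by
    rw [h'def]
    fun_prop
  have hmono : Monotone h' := by
    intro a b hab
    rw [h'def]
    apply div_le_div_of_nonneg_right ?_ hpos.le |>.trans_eq rfl
    simp only [max_def]
    split_ifs <;> linarith
  have hdiff : Differentiable ℝ h := fun x => (hderiv x).differentiableAt
  have hdeq : deriv h = h' := funext fun x => (hderiv x).deriv
  exact ⟨Monotone.convexOn_univ_of_deriv hdiff (hdeq ▸ hmono),
    h', hcont, hderiv⟩
end
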